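/- Let Π_n ∈ ℂ^{I_n×I_n}, n = 1,…,d, be orthogonal projection matrices acting on the modes of a tensor X ∈ ℂ^{I₁×⋯×I_d}. Then ‖X − X ×₁ Π₁ ×₂ ⋯ ×_d Π_d‖_F² ≤ ∑_{n=1}^d ‖X − X ×_n Π_n‖_F². (Take d = 3 for concreteness: for orthogonal projectors P, Q, R, ‖X − X ×₁P ×₂Q ×₃R‖_F² ≤ ‖X − X×₁P‖_F² + ‖X − X×₂Q‖_F² + ‖X − X×₃R‖_F².) -/

import Mathlib

open Matrix BigOperators

/-- Frobenius norm of a third-order complex tensor. -/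
noncomputable def tfrob {a b c : ℕ} (X : Fin a → Fin b → Fin c → ℂ) : ℝ :=
  Real.sqrt (∑ i, ∑ j, ∑ k, ‖X i j k‖ ^ 2)

/-- Mode-1 product `X ×₁ P` of a third-order tensor with a matrix. -/
noncomputable def mode1 {a b c : ℕ} (P : Matrix (Fin a) (Fin a) ℂ)
    (X : Fin a → Fin b → Fin c → ℂ) : Fin a → Fin b → Fin c → ℂ :=
  fun i j k => ∑ l, P i l * X l j k

/-- Mode-2 product `X ×₂ Q` of a third-order tensor with a matrix. -/
noncomputable def mode2 {a b c : ℕ} (Q : Matrix (Fin b) (Fin b) ℂ)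
    (X : Fin a → Fin b → Fin c → ℂ) : Fin a → Fin b → Fin c → ℂ :=
  fun i j k => ∑ l, Q j l * X i l k

/-- Mode-3 product `X ×₃ R` of a third-order tensor with a matrix. -/
noncomputable def mode3 {a b c : ℕ} (R : Matrix (Fin c) (Fin c) ℂ)
    (X : Fin a → Fin b → Fin c → ℂ) : Fin a → Fin b → Fin c → ℂ :=
  fun i j k => ∑ l, R k l * X i j l

namespace TensorProj

variable {a b c : ℕ}

lemma rot3 {β γ δ M : Type*} [AddCommMonoid M] [Fintype β] [Fintype γ] [Fintype δ]
    (g : β → γ → δ → M) :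
    ∑ j, ∑ k, ∑ l, g j k l = ∑ l, ∑ j, ∑ k, g j k l := by
  calc ∑ j, ∑ k, ∑ l, g j k l = ∑ j, ∑ l, ∑ k, g j k l :=
        Finset.sum_congr rfl fun j _ => Finset.sum_comm
    _ = ∑ l, ∑ j, ∑ k, g j k l := Finset.sum_comm

noncomputable def tinner (Y Z : Fin a → Fin b → Fin c → ℂ) : ℂ :=
  ∑ i, ∑ j, ∑ k, (starRingEnd ℂ) (Y i j k) * Z i j k

noncomputable def N (Y : Fin a → Fin b → Fin c → ℂ) : ℝ :=
  ∑ i, ∑ j, ∑ k, ‖Y i j k‖ ^ 2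

lemma N_nonneg (Y : Fin a → Fin b → Fin c → ℂ) : 0 ≤ N Y := by
  apply Finset.sum_nonneg; intros
  apply Finset.sum_nonneg; intros
  apply Finset.sum_nonneg; intros
  positivity

lemma tfrob_sq (Y : Fin a → Fin b → Fin c → ℂ) : tfrob Y ^ 2 = N Y :=
  Real.sq_sqrt (N_nonneg Y)

lemma norm_add_sq' (y z : ℂ) :
    ‖y + z‖ ^ 2 = ‖y‖ ^ 2 + ‖z‖ ^ 2 + 2 * ((starRingEnd ℂ) y * z).re := by
  simp [← Complex.normSq_eq_norm_sq, Complex.normSq_add, Complex.mul_re,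
    Complex.conj_re, Complex.conj_im, Complex.normSq_apply]
  ring

lemma N_add (Y Z : Fin a → Fin b → Fin c → ℂ) :
    N (Y + Z) = N Y + N Z + 2 * (tinner Y Z).re := by
  simp only [N, tinner, Pi.add_apply, Complex.re_sum, Finset.mul_sum,
    ← Finset.sum_add_distrib]
  refine Finset.sum_congr rfl fun i _ => Finset.sum_congr rfl fun j _ =>
    Finset.sum_congr rfl fun k _ => ?_
  exact norm_add_sq' _ _

lemma tinner_sub_left (Y Y' Z : Fin a → Fin b → Fin c → ℂ) :
    tinner (Y - Y') Z = tinner Y Z - tinner Y' Z := by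
  simp only [tinner, Pi.sub_apply, map_sub, sub_mul, Finset.sum_sub_distrib]

lemma tinner_add_left (Y Y' Z : Fin a → Fin b → Fin c → ℂ) :
    tinner (Y + Y') Z = tinner Y Z + tinner Y' Z := by
  simp only [tinner, Pi.add_apply, map_add, add_mul, Finset.sum_add_distrib]

lemma tinner_conj (Y Z : Fin a → Fin b → Fin c → ℂ) :
    tinner Y Z = (starRingEnd ℂ) (tinner Z Y) := by
  simp only [tinner, map_sum, _root_.map_mul, Complex.conj_conj]
  refine Finset.sum_congr rfl fun i _ => Finset.sum_congr rfl fun j _ =>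
    Finset.sum_congr rfl fun k _ => ?_
  ring

/-! ### adjointness -/

lemma adj1 (P : Matrix (Fin a) (Fin a) ℂ) (Y Z : Fin a → Fin b → Fin c → ℂ) :
    tinner (mode1 P Y) Z = tinner Y (mode1 Pᴴ Z) := by
  simp only [tinner, mode1, map_sum, _root_.map_mul, Finset.sum_mul, Finset.mul_sum,
    Matrix.conjTranspose_apply, Complex.star_def]
  conv_lhs => enter [2, i]; rw [rot3]
  rw [Finset.sum_comm]
  conv_lhs => enter [2, l]; rw [rot3, rot3]
  refine Finset.sum_congr rfl fun l _ => Finset.sum_congr rfl fun j _ =>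
    Finset.sum_congr rfl fun k _ => Finset.sum_congr rfl fun i _ => ?_
  ring

lemma adj2 (Q : Matrix (Fin b) (Fin b) ℂ) (Y Z : Fin a → Fin b → Fin c → ℂ) :
    tinner (mode2 Q Y) Z = tinner Y (mode2 Qᴴ Z) := by
  simp only [tinner, mode2, map_sum, _root_.map_mul, Finset.sum_mul, Finset.mul_sum,
    Matrix.conjTranspose_apply, Complex.star_def]
  conv_lhs => enter [2, i]; rw [rot3]
  conv_lhs => enter [2, i, 2, l]; rw [Finset.sum_comm]
  refine Finset.sum_congr rfl fun i _ => Finset.sum_congr rfl fun l _ =>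
    Finset.sum_congr rfl fun k _ => Finset.sum_congr rfl fun j _ => ?_
  ring

lemma adj3 (R : Matrix (Fin c) (Fin c) ℂ) (Y Z : Fin a → Fin b → Fin c → ℂ) :
    tinner (mode3 R Y) Z = tinner Y (mode3 Rᴴ Z) := by
  simp only [tinner, mode3, map_sum, _root_.map_mul, Finset.sum_mul, Finset.mul_sum,
    Matrix.conjTranspose_apply, Complex.star_def]
  refine Finset.sum_congr rfl fun i _ => Finset.sum_congr rfl fun j _ => ?_
  rw [Finset.sum_comm]
  refine Finset.sum_congr rfl fun k _ => Finset.sum_congr rfl fun l _ => ?_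
  ring

/-! ### composition and commutation -/

lemma mode1_mode1 (P P' : Matrix (Fin a) (Fin a) ℂ) (Y : Fin a → Fin b → Fin c → ℂ) :
    mode1 P (mode1 P' Y) = mode1 (P * P') Y := by
  funext i j k
  simp only [mode1, Matrix.mul_apply, Finset.mul_sum, Finset.sum_mul]
  rw [Finset.sum_comm]
  refine Finset.sum_congr rfl fun l _ => Finset.sum_congr rfl fun m _ => ?_
  ring

lemma mode2_mode2 (Q Q' : Matrix (Fin b) (Fin b) ℂ) (Y : Fin a → Fin b → Fin c → ℂ) :
    mode2 Q (mode2 Q' Y) = mode2 (Q * Q') Y := by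
  funext i j k
  simp only [mode2, Matrix.mul_apply, Finset.mul_sum, Finset.sum_mul]
  rw [Finset.sum_comm]
  refine Finset.sum_congr rfl fun l _ => Finset.sum_congr rfl fun m _ => ?_
  ring

lemma comm12 (P : Matrix (Fin a) (Fin a) ℂ) (Q : Matrix (Fin b) (Fin b) ℂ)
    (Y : Fin a → Fin b → Fin c → ℂ) :
    mode1 P (mode2 Q Y) = mode2 Q (mode1 P Y) := by
  funext i j k
  simp only [mode1, mode2, Finset.mul_sum]
  rw [Finset.sum_comm]
  refine Finset.sum_congr rfl fun l _ => Finset.sum_congr rfl fun m _ => ?_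
  ring

lemma comm13 (P : Matrix (Fin a) (Fin a) ℂ) (R : Matrix (Fin c) (Fin c) ℂ)
    (Y : Fin a → Fin b → Fin c → ℂ) :
    mode1 P (mode3 R Y) = mode3 R (mode1 P Y) := by
  funext i j k
  simp only [mode1, mode3, Finset.mul_sum]
  rw [Finset.sum_comm]
  refine Finset.sum_congr rfl fun l _ => Finset.sum_congr rfl fun m _ => ?_
  ring

lemma comm23 (Q : Matrix (Fin b) (Fin b) ℂ) (R : Matrix (Fin c) (Fin c) ℂ)
    (Y : Fin a → Fin b → Fin c → ℂ) :
    mode2 Q (mode3 R Y) = mode3 R (mode2 Q Y) := by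
  funext i j k
  simp only [mode2, mode3, Finset.mul_sum]
  rw [Finset.sum_comm]
  refine Finset.sum_congr rfl fun l _ => Finset.sum_congr rfl fun m _ => ?_
  ring

lemma mode1_sub (P : Matrix (Fin a) (Fin a) ℂ) (Y Z : Fin a → Fin b → Fin c → ℂ) :
    mode1 P (Y - Z) = mode1 P Y - mode1 P Z := by
  funext i j k
  simp only [mode1, Pi.sub_apply, mul_sub, Finset.sum_sub_distrib]

lemma mode2_sub (Q : Matrix (Fin b) (Fin b) ℂ) (Y Z : Fin a → Fin b → Fin c → ℂ) :
    mode2 Q (Y - Z) = mode2 Q Y - mode2 Q Z := by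
  funext i j k
  simp only [mode2, Pi.sub_apply, mul_sub, Finset.sum_sub_distrib]

/-! ### orthogonality and contraction -/

lemma orth1 (P : Matrix (Fin a) (Fin a) ℂ) (hP : P * P = P) (hP' : Pᴴ = P)
    (U V : Fin a → Fin b → Fin c → ℂ) :
    tinner (U - mode1 P U) (mode1 P V) = 0 := by
  rw [tinner_sub_left, adj1, hP', mode1_mode1, hP, sub_self]

lemma orth2 (Q : Matrix (Fin b) (Fin b) ℂ) (hQ : Q * Q = Q) (hQ' : Qᴴ = Q)
    (U V : Fin a → Fin b → Fin c → ℂ) :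
    tinner (U - mode2 Q U) (mode2 Q V) = 0 := by
  rw [tinner_sub_left, adj2, hQ', mode2_mode2, hQ, sub_self]

lemma contr1 (P : Matrix (Fin a) (Fin a) ℂ) (hP : P * P = P) (hP' : Pᴴ = P)
    (Y : Fin a → Fin b → Fin c → ℂ) : N (mode1 P Y) ≤ N Y := by
  have h0 : tinner (mode1 P Y) (Y - mode1 P Y) = 0 := by
    rw [tinner_conj, orth1 P hP hP', map_zero]
  have h1 : N Y = N (mode1 P Y) + N (Y - mode1 P Y) := by
    have : Y = mode1 P Y + (Y - mode1 P Y) := by abel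
    calc N Y = N (mode1 P Y + (Y - mode1 P Y)) := by rw [← this]
    _ = N (mode1 P Y) + N (Y - mode1 P Y) := by
        rw [N_add, h0]; simp
  have := N_nonneg (Y - mode1 P Y)
  linarith

lemma contr2 (Q : Matrix (Fin b) (Fin b) ℂ) (hQ : Q * Q = Q) (hQ' : Qᴴ = Q)
    (Y : Fin a → Fin b → Fin c → ℂ) : N (mode2 Q Y) ≤ N Y := by
  have h0 : tinner (mode2 Q Y) (Y - mode2 Q Y) = 0 := by
    rw [tinner_conj, orth2 Q hQ hQ', map_zero]
  have h1 : N Y = N (mode2 Q Y) + N (Y - mode2 Q Y) := by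
    have : Y = mode2 Q Y + (Y - mode2 Q Y) := by abel
    calc N Y = N (mode2 Q Y + (Y - mode2 Q Y)) := by rw [← this]
    _ = N (mode2 Q Y) + N (Y - mode2 Q Y) := by
        rw [N_add, h0]; simp
  have := N_nonneg (Y - mode2 Q Y)
  linarith

end TensorProj

open TensorProj

/-- Projection lemma for tensors (case `d = 3`): for orthogonal projectors `P, Q, R`,
`‖X − X×₁P×₂Q×₃R‖_F² ≤ ‖X − X×₁P‖_F² + ‖X − X×₂Q‖_F² + ‖X − X×₃R‖_F²`. -/
theorem tensor_projection_lemma {a b c : ℕ}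
    (P : Matrix (Fin a) (Fin a) ℂ) (hP : P * P = P) (hP' : Pᴴ = P)
    (Q : Matrix (Fin b) (Fin b) ℂ) (hQ : Q * Q = Q) (hQ' : Qᴴ = Q)
    (R : Matrix (Fin c) (Fin c) ℂ) (hR : R * R = R) (hR' : Rᴴ = R)
    (X : Fin a → Fin b → Fin c → ℂ) :
    tfrob (X - mode3 R (mode2 Q (mode1 P X))) ^ 2
      ≤ tfrob (X - mode1 P X) ^ 2 + tfrob (X - mode2 Q X) ^ 2
        + tfrob (X - mode3 R X) ^ 2 := by
  set A := X - mode1 P X with hA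
  set B := mode1 P (X - mode2 Q X) with hB
  set C := mode1 P (mode2 Q (X - mode3 R X)) with hC
  have hsum : X - mode3 R (mode2 Q (mode1 P X)) = A + B + C := by
    rw [hA, hB, hC, mode1_sub, mode2_sub, mode1_sub, ← comm23, ← comm13, ← comm12]
    abel
  have hAB : tinner A B = 0 := orth1 P hP hP' X (X - mode2 Q X)
  have hAC : tinner A C = 0 := orth1 P hP hP' X (mode2 Q (X - mode3 R X))
  have hBC : tinner B C = 0 := by
    have hB' : B = mode1 P X - mode2 Q (mode1 P X) := by
      rw [hB, mode1_sub, comm12]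
    have hC' : C = mode2 Q (mode1 P (X - mode3 R X)) := by
      rw [hC, comm12]
    rw [hB', hC']
    exact orth2 Q hQ hQ' (mode1 P X) (mode1 P (X - mode3 R X))
  have hN : N (A + B + C) = N A + N B + N C := by
    rw [N_add, N_add, tinner_add_left, hAB, hAC, hBC]
    simp
  have hNB : N B ≤ N (X - mode2 Q X) := contr1 P hP hP' _
  have hNC : N C ≤ N (X - mode3 R X) := by
    calc N C ≤ N (mode2 Q (X - mode3 R X)) := contr1 P hP hP' _
    _ ≤ N (X - mode3 R X) := contr2 Q hQ hQ' _
  rw [hsum, tfrob_sq, tfrob_sq, tfrob_sq, tfrob_sq, hN, hA]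
  linarith
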